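/- For finitely-supported discrete random variables X_1,...,X_n and Y, the RSI satisfies RSI(X;Y) ≤ (n-1) log min(|𝒴|, max_j |𝒳_j|) and RSI(X;Y) ≥ -log min(|𝒴|, Π_j |𝒳_j|). -/

import Mathlib

open Classical Finset Real

namespace HOI

/-- Distribution (pmf) of a random variable `X` on a finite sample space with mass `p`. -/
noncomputable def pdist {Ω α : Type} [Fintype Ω] (p : Ω → ℝ) (X : Ω → α) (a : α) : ℝ :=
  ∑ ω, if X ω = a then p ω else 0

/-- Shannon entropy of a finitely-supported discrete random variable. -/
noncomputable def ent {Ω α : Type} [Fintype Ω] [Fintype α] (p : Ω → ℝ) (X : Ω → α) : ℝ :=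
  ∑ a, Real.negMulLog (pdist p X a)

/-- Conditional entropy H(X|Y) = H(X,Y) - H(Y). -/
noncomputable def cent {Ω α β : Type} [Fintype Ω] [Fintype α] [Fintype β]
    (p : Ω → ℝ) (X : Ω → α) (Y : Ω → β) : ℝ :=
  ent p (fun ω => (X ω, Y ω)) - ent p Y

/-- Mutual information I(X;Y). -/
noncomputable def mi {Ω α β : Type} [Fintype Ω] [Fintype α] [Fintype β]
    (p : Ω → ℝ) (X : Ω → α) (Y : Ω → β) : ℝ :=
  ent p X + ent p Y - ent p (fun ω => (X ω, Y ω))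

/-- Conditional mutual information I(X;Y|Z). -/
noncomputable def cmi {Ω α β γ : Type} [Fintype Ω] [Fintype α] [Fintype β] [Fintype γ]
    (p : Ω → ℝ) (X : Ω → α) (Y : Ω → β) (Z : Ω → γ) : ℝ :=
  cent p X Z + cent p Y Z - cent p (fun ω => (X ω, Y ω)) Z

/-- Interaction information II(X;Y;Z) = I(X;Y) - I(X;Y|Z). -/
noncomputable def ii {Ω α β γ : Type} [Fintype Ω] [Fintype α] [Fintype β] [Fintype γ]
    (p : Ω → ℝ) (X : Ω → α) (Y : Ω → β) (Z : Ω → γ) : ℝ :=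
  mi p X Y - cmi p X Y Z

/-- Sub-vector of components of `X` with indices in `s`. -/
def subvec {Ω : Type} {n : ℕ} {α : Fin n → Type} (X : ∀ i, Ω → α i) (s : Finset (Fin n)) :
    Ω → ((i : {j // j ∈ s}) → α i.1) :=
  fun ω i => X i.1 ω

/-- The full random vector. -/
def fullvec {Ω : Type} {n : ℕ} {α : Fin n → Type} (X : ∀ i, Ω → α i) : Ω → (∀ i, α i) :=
  fun ω i => X i ω

/-- Joint entropy of the components of `X` with indices in `s`. -/
noncomputable def vecH {Ω : Type} [Fintype Ω] {n : ℕ} {α : Fin n → Type} [∀ i, Fintype (α i)]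
    (p : Ω → ℝ) (X : ∀ i, Ω → α i) (s : Finset (Fin n)) : ℝ :=
  ent p (subvec X s)

/-- Total correlation. -/
noncomputable def TC {Ω : Type} [Fintype Ω] {n : ℕ} {α : Fin n → Type} [∀ i, Fintype (α i)]
    (p : Ω → ℝ) (X : ∀ i, Ω → α i) : ℝ :=
  (∑ j, ent p (X j)) - ent p (fullvec X)

/-- Dual total correlation. -/
noncomputable def DTC {Ω : Type} [Fintype Ω] {n : ℕ} {α : Fin n → Type} [∀ i, Fintype (α i)]
    (p : Ω → ℝ) (X : ∀ i, Ω → α i) : ℝ :=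
  ent p (fullvec X) - ∑ j, (ent p (fullvec X) - vecH p X (Finset.univ \ {j}))

/-- O-information. -/
noncomputable def Oinfo {Ω : Type} [Fintype Ω] {n : ℕ} {α : Fin n → Type} [∀ i, Fintype (α i)]
    (p : Ω → ℝ) (X : ∀ i, Ω → α i) : ℝ :=
  ((n : ℝ) - 2) * ent p (fullvec X) + ∑ j, (ent p (X j) - vecH p X (Finset.univ \ {j}))

/-- Redundancy-synergy index. -/
noncomputable def RSI {Ω β : Type} [Fintype Ω] [Fintype β] {n : ℕ} {α : Fin n → Type}
    [∀ i, Fintype (α i)] (p : Ω → ℝ) (X : ∀ i, Ω → α i) (Y : Ω → β) : ℝ :=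
  (∑ j, mi p (X j) Y) - mi p (fullvec X) Y

end HOI

open HOI

namespace RSIproof

variable {Ω : Type} [Fintype Ω] {p : Ω → ℝ}

lemma pdist_nonneg {α : Type} (hp : ∀ ω, 0 ≤ p ω) (X : Ω → α) (a : α) :
    0 ≤ pdist p X a :=
  Finset.sum_nonneg fun ω _ => by split <;> simp [hp ω]

lemma pdist_sum {α : Type} [Fintype α] (X : Ω → α) :
    ∑ a, pdist p X a = ∑ ω, p ω := by
  unfold pdist
  rw [Finset.sum_comm]
  simp

lemma gibbs {ι : Type} [Fintype ι] (a b : ι → ℝ) (ha : ∀ i, 0 ≤ a i)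
    (hb : ∀ i, 0 ≤ b i) (h0 : ∀ i, b i = 0 → a i = 0)
    (hsum : ∑ i, b i ≤ ∑ i, a i) :
    ∑ i, Real.negMulLog (a i) ≤ ∑ i, -(a i * Real.log (b i)) := by
  have key : ∀ i, Real.negMulLog (a i) + a i * Real.log (b i) ≤ b i - a i := by
    intro i
    rcases eq_or_lt_of_le (ha i) with h | h
    · simp [← h]
      exact hb i
    · have hbpos : 0 < b i := lt_of_le_of_ne (hb i) fun e => by
        have := h0 i e.symm; linarith
      have hlog : Real.log (b i / a i) ≤ b i / a i - 1 :=
        Real.log_le_sub_one_of_pos (div_pos hbpos h)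
      rw [Real.log_div (ne_of_gt hbpos) (ne_of_gt h)] at hlog
      have h2 := mul_le_mul_of_nonneg_left hlog (le_of_lt h)
      rw [Real.negMulLog]
      have h3 : a i * (b i / a i - 1) = b i - a i := by field_simp
      nlinarith
  have hs := Finset.sum_le_sum (fun i (_ : i ∈ Finset.univ) => key i)
  rw [Finset.sum_add_distrib, Finset.sum_sub_distrib] at hs
  have h4 : ∑ i, -(a i * Real.log (b i)) = -∑ i, a i * Real.log (b i) := by
    rw [Finset.sum_neg_distrib]
  linarith

lemma negMulLog_add_le {x y : ℝ} (hx : 0 ≤ x) (hy : 0 ≤ y) :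
    Real.negMulLog (x + y) ≤ Real.negMulLog x + Real.negMulLog y := by
  rcases eq_or_lt_of_le hx with h | h
  · simp [← h]
  rcases eq_or_lt_of_le hy with h' | h'
  · simp [← h']
  have l1 : Real.log x ≤ Real.log (x + y) := Real.log_le_log h (by linarith)
  have l2 : Real.log y ≤ Real.log (x + y) := Real.log_le_log h' (by linarith)
  simp only [Real.negMulLog, neg_mul]
  nlinarith

lemma negMulLog_sum_le {ι : Type} (s : Finset ι) (f : ι → ℝ) (hf : ∀ i ∈ s, 0 ≤ f i) :
    Real.negMulLog (∑ i ∈ s, f i) ≤ ∑ i ∈ s, Real.negMulLog (f i) := by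
  induction s using Finset.cons_induction with
  | empty => simp
  | cons i s his ih =>
      rw [Finset.sum_cons, Finset.sum_cons]
      refine le_trans (negMulLog_add_le (hf i (Finset.mem_cons_self i s))
        (Finset.sum_nonneg fun j hj => hf j (Finset.mem_cons_of_mem hj))) ?_
      exact add_le_add_right (ih fun j hj => hf j (Finset.mem_cons_of_mem hj)) _

lemma pdist_comp {γ α : Type} [Fintype γ] (W : Ω → γ) (f : γ → α) (a : α) :
    pdist p (fun ω => f (W ω)) a = ∑ c, if f c = a then pdist p W c else 0 := by
  unfold pdist
  have h1 : ∀ c : γ, (if f c = a then ∑ ω, if W ω = c then p ω else 0 else 0)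
      = ∑ ω, if W ω = c ∧ f c = a then p ω else 0 := by
    intro c; split_ifs with h <;> simp [h]
  rw [Finset.sum_congr rfl fun c _ => h1 c, Finset.sum_comm]
  refine Finset.sum_congr rfl fun ω _ => ?_
  simp [ite_and]

lemma pdist_comp_le {γ α : Type} [Fintype γ] [Fintype α] (hp : ∀ ω, 0 ≤ p ω)
    (W : Ω → γ) (f : γ → α) {c : γ} {a : α} (h : f c = a) :
    pdist p W c ≤ pdist p (fun ω => f (W ω)) a := by
  rw [pdist_comp W f]
  have h2 := Finset.single_le_sum (f := fun c => if f c = a then pdist p W c else 0)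
    (fun i _ => by by_cases hfi : f i = a <;> simp [hfi, pdist_nonneg hp W i]) (Finset.mem_univ c)
  simpa only [h, if_true] using h2

lemma ent_comp_le {γ α : Type} [Fintype γ] [Fintype α] (hp : ∀ ω, 0 ≤ p ω)
    (W : Ω → γ) (f : γ → α) :
    ent p (fun ω => f (W ω)) ≤ ent p W := by
  unfold ent
  calc ∑ a, Real.negMulLog (pdist p (fun ω => f (W ω)) a)
      = ∑ a, Real.negMulLog (∑ c ∈ Finset.univ.filter (fun c => f c = a), pdist p W c) := by
        refine Finset.sum_congr rfl fun a _ => ?_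
        rw [pdist_comp, Finset.sum_filter]
    _ ≤ ∑ a, ∑ c ∈ Finset.univ.filter (fun c => f c = a), Real.negMulLog (pdist p W c) :=
        Finset.sum_le_sum fun a _ => negMulLog_sum_le _ _ (fun c _ => pdist_nonneg hp W c)
    _ = ∑ c, Real.negMulLog (pdist p W c) := Finset.sum_fiberwise _ _ _

lemma ent_comp_eq {γ α : Type} [Fintype γ] [Fintype α] [Nonempty γ] (hp : ∀ ω, 0 ≤ p ω)
    (W : Ω → γ) {f : γ → α} (hf : Function.Injective f) :
    ent p (fun ω => f (W ω)) = ent p W := by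
  refine le_antisymm (ent_comp_le hp W f) ?_
  have h : W = fun ω => Function.invFun f (f (W ω)) := by
    funext ω; exact (Function.leftInverse_invFun hf _).symm
  calc ent p W = ent p (fun ω => Function.invFun f (f (W ω))) := by rw [← h]
    _ ≤ ent p (fun ω => f (W ω)) := ent_comp_le hp _ _

lemma pdist_pair_fst {α β : Type} [Fintype α] [Fintype β] (X : Ω → α) (Y : Ω → β) (a : α) :
    pdist p X a = ∑ b, pdist p (fun ω => (X ω, Y ω)) (a, b) := by
  unfold pdist
  rw [Finset.sum_comm]
  refine Finset.sum_congr rfl fun ω _ => ?_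
  simp [Prod.ext_iff, ite_and]

lemma pdist_pair_snd {α β : Type} [Fintype α] [Fintype β] (X : Ω → α) (Y : Ω → β) (b : β) :
    pdist p Y b = ∑ a, pdist p (fun ω => (X ω, Y ω)) (a, b) := by
  unfold pdist
  rw [Finset.sum_comm]
  refine Finset.sum_congr rfl fun ω _ => ?_
  simp [Prod.ext_iff, ite_and]

lemma pdist_triple_mid {α β γ : Type} [Fintype α] [Fintype β] [Fintype γ]
    (A : Ω → α) (B : Ω → β) (C : Ω → γ) (x : α) (z : γ) :
    pdist p (fun ω => (A ω, C ω)) (x, z)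
      = ∑ y, pdist p (fun ω => (A ω, B ω, C ω)) (x, y, z) := by
  unfold pdist
  rw [Finset.sum_comm]
  refine Finset.sum_congr rfl fun ω _ => ?_
  simp [Prod.ext_iff, ite_and]

lemma pdist_triple_left {α β γ : Type} [Fintype α] [Fintype β] [Fintype γ]
    (A : Ω → α) (B : Ω → β) (C : Ω → γ) (y : β) (z : γ) :
    pdist p (fun ω => (B ω, C ω)) (y, z)
      = ∑ x, pdist p (fun ω => (A ω, B ω, C ω)) (x, y, z) := by
  unfold pdist
  rw [Finset.sum_comm]
  refine Finset.sum_congr rfl fun ω _ => ?_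
  simp [Prod.ext_iff, ite_and]

lemma reorder {α β γ : Type} [Fintype α] [Fintype β] [Fintype γ] (g : α × β × γ → ℝ) :
    ∑ w, g w = ∑ z, ∑ x, ∑ y, g (x, y, z) := by
  rw [Fintype.sum_prod_type]
  calc ∑ x, ∑ v : β × γ, g (x, v)
      = ∑ x, ∑ z, ∑ y, g (x, y, z) := by
        refine Finset.sum_congr rfl fun x _ => ?_
        rw [Fintype.sum_prod_type]
        exact Finset.sum_comm
    _ = ∑ z, ∑ x, ∑ y, g (x, y, z) := Finset.sum_comm

lemma reorder2 {α β γ : Type} [Fintype α] [Fintype β] [Fintype γ] (g : α × β × γ → ℝ) :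
    ∑ w, g w = ∑ z, ∑ y, ∑ x, g (x, y, z) := by
  rw [reorder]
  exact Finset.sum_congr rfl fun z _ => Finset.sum_comm

lemma ent_pair_le {α β : Type} [Fintype α] [Fintype β] (hp : ∀ ω, 0 ≤ p ω)
    (hp1 : ∑ ω, p ω = 1) (X : Ω → α) (Y : Ω → β) :
    ent p (fun ω => (X ω, Y ω)) ≤ ent p X + ent p Y := by
  simp only [ent]
  set r := pdist p (fun ω => (X ω, Y ω)) with hrdef
  set q := pdist p X with hqdef
  set s := pdist p Y with hsdef
  have hrn : ∀ c, 0 ≤ r c := pdist_nonneg hp _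
  have hqn : ∀ a, 0 ≤ q a := pdist_nonneg hp _
  have hsn : ∀ b, 0 ≤ s b := pdist_nonneg hp _
  have hrq : ∀ c : α × β, r c ≤ q c.1 := fun c => pdist_comp_le hp _ Prod.fst rfl
  have hrs : ∀ c : α × β, r c ≤ s c.2 := fun c => pdist_comp_le hp _ Prod.snd rfl
  have hq1 : ∑ a, q a = 1 := by rw [hqdef, pdist_sum, hp1]
  have hs1 : ∑ b, s b = 1 := by rw [hsdef, pdist_sum, hp1]
  have hr1 : ∑ c, r c = 1 := by rw [hrdef, pdist_sum, hp1]
  have key := gibbs r (fun c => q c.1 * s c.2) hrn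
    (fun c => mul_nonneg (hqn _) (hsn _))
    (fun c hc => by
      rcases mul_eq_zero.1 hc with h | h
      · exact le_antisymm (h ▸ hrq c) (hrn c)
      · exact le_antisymm (h ▸ hrs c) (hrn c))
    (by
      rw [hr1, Fintype.sum_prod_type]
      have : ∑ x, ∑ y, q x * s y = 1 := by
        rw [← Finset.sum_mul_sum, hq1, hs1, one_mul]
      rw [this])
  have e1 : ∀ c : α × β, -(r c * Real.log (q c.1 * s c.2))
      = -(r c * Real.log (q c.1)) + -(r c * Real.log (s c.2)) := by
    intro c
    rcases eq_or_lt_of_le (hrn c) with h | h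
    · simp [← h]
    · have hq : q c.1 ≠ 0 := ne_of_gt (lt_of_lt_of_le h (hrq c))
      have hs : s c.2 ≠ 0 := ne_of_gt (lt_of_lt_of_le h (hrs c))
      rw [Real.log_mul hq hs]; ring
  refine le_trans key ?_
  have split : ∑ c, -(r c * Real.log (q c.1 * s c.2))
      = (∑ c : α × β, -(r c * Real.log (q c.1))) + ∑ c : α × β, -(r c * Real.log (s c.2)) := by
    rw [← Finset.sum_add_distrib]
    exact Finset.sum_congr rfl fun c _ => e1 c
  rw [split]
  have hQ : ∑ c : α × β, -(r c * Real.log (q c.1)) = ∑ a, Real.negMulLog (q a) := by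
    rw [Fintype.sum_prod_type]
    refine Finset.sum_congr rfl fun a _ => ?_
    rw [Finset.sum_neg_distrib]
    dsimp only
    rw [← Finset.sum_mul, ← pdist_pair_fst X Y a]
    simp [Real.negMulLog, hqdef]
  have hS : ∑ c : α × β, -(r c * Real.log (s c.2)) = ∑ b, Real.negMulLog (s b) := by
    rw [Fintype.sum_prod_type, Finset.sum_comm]
    refine Finset.sum_congr rfl fun b _ => ?_
    rw [Finset.sum_neg_distrib]
    dsimp only
    rw [← Finset.sum_mul, ← pdist_pair_snd X Y b]
    simp [Real.negMulLog, hsdef]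
  rw [hQ, hS]

set_option maxHeartbeats 1000000 in
lemma ssa {α β γ : Type} [Fintype α] [Fintype β] [Fintype γ]
    (hp : ∀ ω, 0 ≤ p ω) (hp1 : ∑ ω, p ω = 1)
    (A : Ω → α) (B : Ω → β) (C : Ω → γ) :
    ent p (fun ω => (A ω, B ω, C ω)) + ent p C
      ≤ ent p (fun ω => (A ω, C ω)) + ent p (fun ω => (B ω, C ω)) := by
  simp only [ent]
  set r := pdist p (fun ω => (A ω, B ω, C ω)) with hrdef
  set q := pdist p (fun ω => (A ω, C ω)) with hqdef
  set s := pdist p (fun ω => (B ω, C ω)) with hsdef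
  set t := pdist p C with htdef
  have hrn : ∀ w, 0 ≤ r w := pdist_nonneg hp _
  have hqn : ∀ v, 0 ≤ q v := pdist_nonneg hp _
  have hsn : ∀ u, 0 ≤ s u := pdist_nonneg hp _
  have htn : ∀ z, 0 ≤ t z := pdist_nonneg hp _
  have hrq : ∀ w : α × β × γ, r w ≤ q (w.1, w.2.2) :=
    fun w => pdist_comp_le hp _ (fun w : α × β × γ => (w.1, w.2.2)) rfl
  have hrs : ∀ w : α × β × γ, r w ≤ s w.2 := fun w => pdist_comp_le hp _ Prod.snd rfl
  have hrt : ∀ w : α × β × γ, r w ≤ t w.2.2 := fun w => pdist_comp_le hp _ (fun w : α × β × γ => w.2.2) rfl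
  have hmq : ∀ x z, ∑ y, r (x, y, z) = q (x, z) := fun x z => (pdist_triple_mid A B C x z).symm
  have hms : ∀ y z, ∑ x, r (x, y, z) = s (y, z) := fun y z => (pdist_triple_left A B C y z).symm
  have hmt : ∀ z, ∑ x, q (x, z) = t z := fun z => (pdist_pair_snd A C z).symm
  have hmt2 : ∀ z, ∑ y, s (y, z) = t z := fun z => (pdist_pair_snd B C z).symm
  have hr1 : ∑ w, r w = 1 := by rw [hrdef, pdist_sum, hp1]
  have ht1 : ∑ z, t z = 1 := by rw [htdef, pdist_sum, hp1]
  set b : α × β × γ → ℝ :=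
    fun w => if t w.2.2 = 0 then 0 else q (w.1, w.2.2) * s w.2 / t w.2.2 with hbdef
  have hbn : ∀ w, 0 ≤ b w := by
    intro w
    rw [hbdef]
    dsimp only
    split
    · exact le_refl 0
    · exact div_nonneg (mul_nonneg (hqn _) (hsn _)) (htn _)
  have h0 : ∀ w, b w = 0 → r w = 0 := by
    intro w hw
    rw [hbdef] at hw
    dsimp only at hw
    by_cases ht : t w.2.2 = 0
    · exact le_antisymm (ht ▸ hrt w) (hrn w)
    · rw [if_neg ht, div_eq_zero_iff] at hw
      rcases hw with hw | hw
      · rcases mul_eq_zero.1 hw with h | h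
        · exact le_antisymm (h ▸ hrq w) (hrn w)
        · exact le_antisymm (h ▸ hrs w) (hrn w)
      · exact absurd hw ht
  have hb_sum : ∑ w, b w ≤ 1 := by
    rw [reorder b]
    calc ∑ z, ∑ x, ∑ y, b (x, y, z) ≤ ∑ z, t z := by
          refine Finset.sum_le_sum fun z _ => ?_
          by_cases ht : t z = 0
          · simp [hbdef, ht, htn z]
          · have heq : ∑ x, ∑ y, b (x, y, z) = t z := by
              have inner : ∀ x, ∑ y, b (x, y, z) = q (x, z) * t z / t z := by
                intro x
                simp only [hbdef, if_neg ht]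
                rw [← Finset.sum_div, ← Finset.mul_sum, hmt2 z]
              rw [Finset.sum_congr rfl fun x _ => inner x]
              rw [← Finset.sum_div, ← Finset.sum_mul, hmt z, mul_div_assoc,
                div_self ht, mul_one]
            rw [heq]
      _ = 1 := ht1
  have key := gibbs r b hrn hbn h0 (by rw [hr1]; exact hb_sum)
  have e1 : ∀ w, -(r w * Real.log (b w))
      = -(r w * Real.log (q (w.1, w.2.2))) + -(r w * Real.log (s w.2))
        + r w * Real.log (t w.2.2) := by
    intro w
    rcases eq_or_lt_of_le (hrn w) with h | h
    · simp [← h]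
    · have htpos : 0 < t w.2.2 := lt_of_lt_of_le h (hrt w)
      have hqpos : 0 < q (w.1, w.2.2) := lt_of_lt_of_le h (hrq w)
      have hspos : 0 < s w.2 := lt_of_lt_of_le h (hrs w)
      rw [hbdef]
      dsimp only
      rw [if_neg (ne_of_gt htpos),
        Real.log_div (ne_of_gt (mul_pos hqpos hspos)) (ne_of_gt htpos),
        Real.log_mul (ne_of_gt hqpos) (ne_of_gt hspos)]
      ring
  have hsplit : ∑ w, -(r w * Real.log (b w))
      = (∑ w, -(r w * Real.log (q (w.1, w.2.2)))) + (∑ w, -(r w * Real.log (s w.2)))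
        + ∑ w, r w * Real.log (t w.2.2) := by
    rw [← Finset.sum_add_distrib, ← Finset.sum_add_distrib]
    exact Finset.sum_congr rfl fun w _ => e1 w
  have hQ : ∑ w : α × β × γ, -(r w * Real.log (q (w.1, w.2.2)))
      = ∑ v : α × γ, Real.negMulLog (q v) := by
    rw [reorder fun w => -(r w * Real.log (q (w.1, w.2.2)))]
    calc ∑ z, ∑ x, ∑ y, -(r (x, y, z) * Real.log (q ((x, y, z).1, (x, y, z).2.2)))
        = ∑ z, ∑ x, Real.negMulLog (q (x, z)) := by
          refine Finset.sum_congr rfl fun z _ => Finset.sum_congr rfl fun x _ => ?_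
          rw [Finset.sum_neg_distrib]
          dsimp only
          rw [← Finset.sum_mul, hmq x z]
          simp [Real.negMulLog]
      _ = ∑ x, ∑ z, Real.negMulLog (q (x, z)) := Finset.sum_comm
      _ = ∑ v : α × γ, Real.negMulLog (q v) :=
          (Fintype.sum_prod_type (fun v : α × γ => Real.negMulLog (q v))).symm
  have hS : ∑ w : α × β × γ, -(r w * Real.log (s w.2))
      = ∑ u : β × γ, Real.negMulLog (s u) := by
    rw [reorder2 fun w => -(r w * Real.log (s w.2))]
    calc ∑ z, ∑ y, ∑ x, -(r (x, y, z) * Real.log (s ((x, y, z).2)))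
        = ∑ z, ∑ y, Real.negMulLog (s (y, z)) := by
          refine Finset.sum_congr rfl fun z _ => Finset.sum_congr rfl fun y _ => ?_
          rw [Finset.sum_neg_distrib]
          dsimp only
          rw [← Finset.sum_mul, hms y z]
          simp [Real.negMulLog]
      _ = ∑ y, ∑ z, Real.negMulLog (s (y, z)) := Finset.sum_comm
      _ = ∑ u : β × γ, Real.negMulLog (s u) :=
          (Fintype.sum_prod_type (fun u : β × γ => Real.negMulLog (s u))).symm
  have hT : ∑ w : α × β × γ, r w * Real.log (t w.2.2) = ∑ z, t z * Real.log (t z) := by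
    rw [reorder fun w => r w * Real.log (t w.2.2)]
    refine Finset.sum_congr rfl fun z _ => ?_
    calc ∑ x, ∑ y, r (x, y, z) * Real.log (t ((x, y, z).2.2))
        = ∑ x, q (x, z) * Real.log (t z) := by
          refine Finset.sum_congr rfl fun x _ => ?_
          dsimp only
          rw [← Finset.sum_mul, hmq x z]
      _ = t z * Real.log (t z) := by rw [← Finset.sum_mul, hmt z]
  have hTent : ∑ z, Real.negMulLog (t z) = -∑ z, t z * Real.log (t z) := by
    rw [← Finset.sum_neg_distrib]
    exact Finset.sum_congr rfl fun z _ => by simp [Real.negMulLog]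
  rw [hsplit, hQ, hS, hT] at key
  linarith [key, hTent]

lemma ent_nonneg {α : Type} [Fintype α] (hp : ∀ ω, 0 ≤ p ω) (hp1 : ∑ ω, p ω = 1)
    (X : Ω → α) : 0 ≤ ent p X := by
  refine Finset.sum_nonneg fun a _ => Real.negMulLog_nonneg (pdist_nonneg hp X a) ?_
  calc pdist p X a ≤ ∑ b, pdist p X b :=
        Finset.single_le_sum (fun b _ => pdist_nonneg hp X b) (Finset.mem_univ a)
    _ = 1 := by rw [pdist_sum, hp1]

lemma ent_le_log_card {α : Type} [Fintype α] [Nonempty α] (hp : ∀ ω, 0 ≤ p ω)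
    (hp1 : ∑ ω, p ω = 1) (X : Ω → α) :
    ent p X ≤ Real.log (Fintype.card α) := by
  have hN : (0:ℝ) < (Fintype.card α : ℝ) := by exact_mod_cast Fintype.card_pos
  have key := gibbs (pdist p X) (fun _ => (Fintype.card α : ℝ)⁻¹) (pdist_nonneg hp X)
    (fun _ => le_of_lt (inv_pos.2 hN)) (fun a h => absurd h (ne_of_gt (inv_pos.2 hN)))
    (by rw [pdist_sum, hp1, Finset.sum_const, Finset.card_univ, nsmul_eq_mul,
          mul_inv_cancel₀ (ne_of_gt hN)])
  rw [ent]
  refine le_trans key ?_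
  have e : ∀ a, -(pdist p X a * Real.log ((Fintype.card α : ℝ)⁻¹))
      = pdist p X a * Real.log (Fintype.card α) := by
    intro a; rw [Real.log_inv]; ring
  rw [Finset.sum_congr rfl fun a _ => e a, ← Finset.sum_mul, pdist_sum, hp1, one_mul]

lemma mi_nonneg {α β : Type} [Fintype α] [Fintype β] (hp : ∀ ω, 0 ≤ p ω)
    (hp1 : ∑ ω, p ω = 1) (X : Ω → α) (Y : Ω → β) : 0 ≤ mi p X Y := by
  have h := ent_pair_le hp hp1 X Y
  unfold mi
  linarith

lemma mi_le_ent_fst {α β : Type} [Fintype α] [Fintype β] (hp : ∀ ω, 0 ≤ p ω)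
    (X : Ω → α) (Y : Ω → β) : mi p X Y ≤ ent p X := by
  have h : ent p Y ≤ ent p (fun ω => (X ω, Y ω)) :=
    ent_comp_le hp (fun ω => (X ω, Y ω)) Prod.snd
  unfold mi
  linarith

lemma mi_le_ent_snd {α β : Type} [Fintype α] [Fintype β] (hp : ∀ ω, 0 ≤ p ω)
    (X : Ω → α) (Y : Ω → β) : mi p X Y ≤ ent p Y := by
  have h : ent p X ≤ ent p (fun ω => (X ω, Y ω)) :=
    ent_comp_le hp (fun ω => (X ω, Y ω)) Prod.fst
  unfold mi
  linarith

lemma data_proc {γ δ β : Type} [Fintype γ] [Fintype δ] [Fintype β] [Nonempty Ω]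
    (hp : ∀ ω, 0 ≤ p ω) (hp1 : ∑ ω, p ω = 1) (Z : Ω → γ) (Y : Ω → β) (f : γ → δ) :
    mi p (fun ω => f (Z ω)) Y ≤ mi p Z Y := by
  have ω0 : Ω := Classical.arbitrary Ω
  haveI : Nonempty γ := ⟨Z ω0⟩
  haveI : Nonempty (γ × β) := ⟨(Z ω0, Y ω0)⟩
  haveI : Nonempty (δ × β) := ⟨(f (Z ω0), Y ω0)⟩
  have hssa := ssa hp hp1 Z Y (fun ω => f (Z ω))
  beta_reduce at hssa
  have e1 : ent p (fun ω => (Z ω, Y ω, f (Z ω))) = ent p (fun ω => (Z ω, Y ω)) := by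
    have hg : Function.Injective (fun v : γ × β => (v.1, v.2, f v.1)) := by
      intro u v h
      simp only [Prod.mk.injEq] at h
      exact Prod.ext h.1 h.2.1
    exact ent_comp_eq hp (fun ω => (Z ω, Y ω)) hg
  have e2 : ent p (fun ω => (Z ω, f (Z ω))) = ent p Z := by
    have hg : Function.Injective (fun z : γ => (z, f z)) := by
      intro u v h
      simp only [Prod.mk.injEq] at h
      exact h.1
    exact ent_comp_eq hp Z hg
  have e3 : ent p (fun ω => (Y ω, f (Z ω))) = ent p (fun ω => (f (Z ω), Y ω)) :=
    ent_comp_eq hp (fun ω => (f (Z ω), Y ω)) Prod.swap_injective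
  rw [e1, e2, e3] at hssa
  unfold mi
  linarith

end RSIproof

open RSIproof

/-- bounds on the RSI. -/
theorem rsi_bounds {Ω β : Type} [Fintype Ω] [Fintype β] {n : ℕ}
    {α : Fin n → Type} [∀ i, Fintype (α i)]
    (p : Ω → ℝ) (hp : ∀ ω, 0 ≤ p ω) (hp1 : ∑ ω, p ω = 1)
    (X : ∀ i, Ω → α i) (Y : Ω → β) :
    RSI p X Y ≤ ((n : ℝ) - 1) *
        Real.log ((min (Fintype.card β)
          (Finset.univ.sup fun j : Fin n => Fintype.card (α j)) : ℕ) : ℝ)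
    ∧ -Real.log ((min (Fintype.card β) (∏ j, Fintype.card (α j)) : ℕ) : ℝ)
        ≤ RSI p X Y := by
  classical
  haveI hΩ : Nonempty Ω := by
    rcases isEmpty_or_nonempty Ω with h | h
    · rw [Finset.univ_eq_empty, Finset.sum_empty] at hp1
      exact absurd hp1 one_ne_zero.symm
    · exact h
  have ω0 : Ω := Classical.arbitrary Ω
  haveI hβ : Nonempty β := ⟨Y ω0⟩
  haveI hαf : Nonempty (∀ i, α i) := ⟨fun i => X i ω0⟩
  haveI hαj : ∀ j, Nonempty (α j) := fun j => ⟨X j ω0⟩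
  have hβ1 : 1 ≤ Fintype.card β := Fintype.card_pos
  have mi_full_nonneg : 0 ≤ mi p (fullvec X) Y := mi_nonneg hp hp1 _ _
  constructor
  · -- upper bound
    rcases Nat.eq_zero_or_pos n with hn | hn
    · subst hn
      have hRSI : RSI p X Y = - mi p (fullvec X) Y := by
        unfold RSI
        rw [Finset.univ_eq_empty, Finset.sum_empty]
        ring
      rw [hRSI]
      have : ((Finset.univ : Finset (Fin 0)).sup fun j => Fintype.card (α j)) = 0 := by
        rw [Finset.univ_eq_empty, Finset.sup_empty]
        rfl
      rw [this]
      simp only [Nat.min_zero, Nat.cast_zero, Real.log_zero, Nat.cast_zero, mul_zero]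
      · linarith
    · set S := Finset.univ.sup (fun j : Fin n => Fintype.card (α j)) with hSdef
      have j1 : Fin n := ⟨0, hn⟩
      have hSle : ∀ j : Fin n, Fintype.card (α j) ≤ S := by
        intro j
        rw [hSdef]
        exact Finset.le_sup (f := fun j : Fin n => Fintype.card (α j)) (Finset.mem_univ j)
      have hS1 : 1 ≤ S := le_trans (Fintype.card_pos (α := α j1)) (hSle j1)
      have hm1 : 1 ≤ min (Fintype.card β) S := le_min hβ1 hS1
      have hmlog : ∀ j : Fin n, mi p (X j) Y
          ≤ Real.log ((min (Fintype.card β) S : ℕ) : ℝ) := by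
        intro j
        have h1 : mi p (X j) Y ≤ Real.log (Fintype.card β) :=
          le_trans (mi_le_ent_snd hp (X j) Y) (ent_le_log_card hp hp1 Y)
        have h2 : mi p (X j) Y ≤ Real.log S := by
          refine le_trans (le_trans (mi_le_ent_fst hp (X j) Y)
            (ent_le_log_card hp hp1 (X j))) ?_
          have : (Fintype.card (α j) : ℝ) ≤ (S : ℝ) := by exact_mod_cast hSle j
          exact Real.log_le_log (by exact_mod_cast Fintype.card_pos (α := α j)) this
        rcases le_total (Fintype.card β) S with h | h
        · rw [min_eq_left h]; exact h1
        · rw [min_eq_right h]; exact h2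
      obtain ⟨j0, -, hj0⟩ := Finset.exists_max_image Finset.univ
        (fun j : Fin n => mi p (X j) Y) ⟨j1, Finset.mem_univ j1⟩
      have hdp : mi p (X j0) Y ≤ mi p (fullvec X) Y :=
        data_proc hp hp1 (fullvec X) Y (fun v => v j0)
      have hsum_split : ∑ j, mi p (X j) Y
          = (∑ j ∈ Finset.univ \ {j0}, mi p (X j) Y) + mi p (X j0) Y :=
        (Finset.sum_eq_sum_sdiff_singleton_add (Finset.mem_univ j0) _)
      have step1 : RSI p X Y ≤ ∑ j ∈ Finset.univ \ {j0}, mi p (X j) Y := by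
        unfold RSI
        rw [hsum_split]
        linarith
      refine le_trans step1 ?_
      have hcard : (Finset.univ \ {j0} : Finset (Fin n)).card = n - 1 := by
        rw [Finset.card_sdiff_of_subset (Finset.singleton_subset_iff.2 (Finset.mem_univ j0))]
        simp
      have hbound := Finset.sum_le_card_nsmul (Finset.univ \ {j0})
        (fun j => mi p (X j) Y) (Real.log ((min (Fintype.card β) S : ℕ) : ℝ))
        (fun j _ => hmlog j)
      rw [hcard, nsmul_eq_mul] at hbound
      refine le_trans hbound ?_
      have : ((n - 1 : ℕ) : ℝ) = (n : ℝ) - 1 := by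
        rw [Nat.cast_sub hn]; norm_num
      rw [this]
  · -- lower bound
    have hsum_nonneg : 0 ≤ ∑ j, mi p (X j) Y :=
      Finset.sum_nonneg fun j _ => mi_nonneg hp hp1 _ _
    have hfull : mi p (fullvec X) Y
        ≤ Real.log ((min (Fintype.card β) (∏ j, Fintype.card (α j)) : ℕ) : ℝ) := by
      have h1 : mi p (fullvec X) Y ≤ Real.log (Fintype.card β) :=
        le_trans (mi_le_ent_snd hp (fullvec X) Y) (ent_le_log_card hp hp1 Y)
      have h2 : mi p (fullvec X) Y ≤ Real.log ((∏ j, Fintype.card (α j) : ℕ) : ℝ) := by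
        have hcard : Fintype.card (∀ i, α i) = ∏ j, Fintype.card (α j) :=
          Fintype.card_pi
        refine le_trans (le_trans (mi_le_ent_fst hp (fullvec X) Y)
          (ent_le_log_card hp hp1 (fullvec X))) ?_
        rw [hcard]
      rcases le_total (Fintype.card β) (∏ j, Fintype.card (α j)) with h | h
      · rw [min_eq_left h]; exact h1
      · rw [min_eq_right h]; exact h2
    unfold RSI
    linarith
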